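/- The 2-transformation S : [0,1] → [0,1] defined by S(x) = {(3/2)x} for x ∈ [0,1/3), S(x) = {(3/2)x, (3/2)x − 1/2} for x ∈ [1/3,2/3], and S(x) = {(3/2)x − 1/2} for x ∈ (2/3,1] preserves Lebesgue measure λ. -/

import Mathlib

open MeasureTheory Set Filter Finset
open scoped ENNReal Classical

noncomputable section

/-- The stochastic kernel of a finite-multivalued transformation `S`:
`K(x,B) = |S(x) ∩ B| / |S(x)|`, valued in `ℝ≥0∞`. -/
def fker {X : Type*} (S : X → Finset X) (x : X) (B : Set X) : ℝ≥0∞ :=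
  (((S x).filter (fun y => y ∈ B)).card : ℝ≥0∞) / ((S x).card : ℝ≥0∞)

/-- The set `S⁻¹_{k;l}(B) = {x : |S(x)| = k, |S(x) ∩ B| = l}`. -/
def preimKL {X : Type*} (S : X → Finset X) (k l : ℕ) (B : Set X) : Set X :=
  {x | (S x).card = k ∧ ((S x).filter (fun y => y ∈ B)).card = l}

/-- The full preimage `S⁻¹(B) = {x : S(x) ∩ B ≠ ∅}`. -/
def fullPre {X : Type*} (S : X → Finset X) (B : Set X) : Set X :=
  {x | ∃ y ∈ S x, y ∈ B}

/-- The Koopman operator `Uf(x) = (1/|S(x)|) ∑_{y ∈ S(x)} f(y)`. -/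
def koop {X : Type*} (S : X → Finset X) (f : X → ℝ) (x : X) : ℝ :=
  (∑ y ∈ S x, f y) / ((S x).card : ℝ)


lemma vol_aff (a b : ℝ) (ha : a ≠ 0) (A : Set ℝ) :
    volume ((fun x => a * x + b)⁻¹' A) = ENNReal.ofReal |a⁻¹| * volume A := by
  have h : (fun x : ℝ => a * x + b) = (fun x : ℝ => x + b) ∘ (fun x : ℝ => a * x) := rfl
  rw [h, Set.preimage_comp, Real.volume_preimage_mul_left ha, measure_preimage_add_right]

lemma arith23 (u v : ℝ≥0∞) :
    ENNReal.ofReal (2/3) * u + ((ENNReal.ofReal (2/3) * v + ENNReal.ofReal (2/3) * u) * 2⁻¹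
      + ENNReal.ofReal (2/3) * v) = u + v := by
  have h2 : (2⁻¹ : ℝ≥0∞) = ENNReal.ofReal 2⁻¹ := by
    rw [ENNReal.ofReal_inv_of_pos (by norm_num)]; norm_num
  have key : ∀ t : ℝ≥0∞, ENNReal.ofReal (2/3) * t + ENNReal.ofReal (2/3) * t * 2⁻¹ = t := by
    intro t
    rw [h2, mul_right_comm, ← ENNReal.ofReal_mul (by norm_num), ← add_mul,
      ← ENNReal.ofReal_add (by norm_num) (by norm_num)]
    norm_num
  calc ENNReal.ofReal (2/3) * u + ((ENNReal.ofReal (2/3) * v + ENNReal.ofReal (2/3) * u) * 2⁻¹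
      + ENNReal.ofReal (2/3) * v)
      = (ENNReal.ofReal (2/3) * u + ENNReal.ofReal (2/3) * u * 2⁻¹)
        + (ENNReal.ofReal (2/3) * v + ENNReal.ofReal (2/3) * v * 2⁻¹) := by ring
    _ = u + v := by rw [key, key]

theorem ex3_preserving :
    ∀ B : Set ℝ, MeasurableSet B →
      ∫⁻ x, fker (fun x : ℝ =>
          if x < 1/3 then ({(3/2)*x} : Finset ℝ)
          else if x ≤ 2/3 then {(3/2)*x, (3/2)*x - 1/2}
          else {(3/2)*x - 1/2}) x B
          ∂(volume.restrict (Set.Icc (0:ℝ) 1)) =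
        (volume.restrict (Set.Icc (0:ℝ) 1)) B := by
  intro B hB
  set f₁ : ℝ → ℝ := fun x => (3/2) * x with hf₁
  set f₂ : ℝ → ℝ := fun x => (3/2) * x - 1/2 with hf₂
  set A₁ : Set ℝ := f₁ ⁻¹' B with hA₁def
  set A₂ : Set ℝ := f₂ ⁻¹' B with hA₂def
  have hmf₁ : Measurable f₁ := by fun_prop
  have hmf₂ : Measurable f₂ := by fun_prop
  have hA₁ : MeasurableSet A₁ := hmf₁ hB
  have hA₂ : MeasurableSet A₂ := hmf₂ hB
  -- pointwise description of the kernel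
  have hker : ∀ x : ℝ,
      fker (fun x : ℝ =>
          if x < 1/3 then ({(3/2)*x} : Finset ℝ)
          else if x ≤ 2/3 then {(3/2)*x, (3/2)*x - 1/2}
          else {(3/2)*x - 1/2}) x B
      = if x < 1/3 then A₁.indicator 1 x
        else if x ≤ 2/3 then (A₁.indicator 1 x + A₂.indicator 1 x) / 2
        else A₂.indicator 1 x := by
    intro x
    have hne : (3/2)*x ≠ (3/2)*x - 2⁻¹ := by intro h; linarith
    by_cases h1 : x < 1/3
    · simp only [fker, h1, if_true, if_pos h1]
      simp [Finset.filter_singleton, Set.indicator_apply, Set.mem_preimage, hA₁def, hf₁]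
      split <;> simp
    · by_cases h2 : x ≤ 2/3
      · simp only [fker, h1, h2, if_false, if_true, if_neg h1, if_pos h2]
        by_cases ha : (3/2)*x ∈ B <;> by_cases hb : (3/2)*x - 2⁻¹ ∈ B <;>
          simp [Finset.filter_insert, Finset.filter_singleton,
            Finset.card_insert_of_notMem, hne, ha, hb, Set.indicator_apply,
            Set.mem_preimage, hA₁def, hA₂def, hf₁, hf₂, one_add_one_eq_two]
      · simp only [fker, h1, h2, if_false, if_neg h1, if_neg h2]
        simp [Finset.filter_singleton, Set.indicator_apply, Set.mem_preimage, hA₂def, hf₂]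
        split <;> simp
  simp only [hker]
  -- split the integral over the three intervals
  have hsplit : Set.Icc (0:ℝ) 1
      = Set.Ico 0 (1/3) ∪ (Set.Icc (1/3) (2/3) ∪ Set.Ioc (2/3) 1) := by
    rw [Set.Icc_union_Ioc_eq_Icc (by norm_num) (by norm_num),
      Set.Ico_union_Icc_eq_Icc (by norm_num) (by norm_num)]
  have hd1 : Disjoint (Set.Ico (0:ℝ) (1/3)) (Set.Icc (1/3) (2/3) ∪ Set.Ioc (2/3) 1) := by
    rw [Set.disjoint_left]
    rintro y ⟨_, hy⟩ (⟨hy', _⟩ | ⟨hy', _⟩) <;> linarith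
  have hd2 : Disjoint (Set.Icc (1/3:ℝ) (2/3)) (Set.Ioc (2/3) 1) := by
    rw [Set.disjoint_left]
    rintro y ⟨_, hy⟩ ⟨hy', _⟩; linarith
  rw [Measure.restrict_apply hB]
  conv_lhs => rw [hsplit]
  rw [Measure.restrict_union hd1 ((measurableSet_Icc.union measurableSet_Ioc)),
    Measure.restrict_union hd2 measurableSet_Ioc, lintegral_add_measure, lintegral_add_measure]
  -- identify each piece
  have e1 : ∫⁻ x in Set.Ico (0:ℝ) (1/3),
      (if x < 1/3 then A₁.indicator 1 x
        else if x ≤ 2/3 then (A₁.indicator 1 x + A₂.indicator 1 x) / 2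
        else A₂.indicator 1 x) ∂volume = volume (A₁ ∩ Set.Ico 0 (1/3)) := by
    have key1 : ∀ x ∈ Set.Ico (0:ℝ) (1/3),
        (if x < 1/3 then A₁.indicator (1 : ℝ → ℝ≥0∞) x
          else if x ≤ 2/3 then (A₁.indicator 1 x + A₂.indicator 1 x) / 2
          else A₂.indicator 1 x) = A₁.indicator 1 x := fun x hx => if_pos hx.2
    rw [setLIntegral_congr_fun measurableSet_Ico key1,
      lintegral_indicator_one hA₁, Measure.restrict_apply hA₁]
  have e3 : ∫⁻ x in Set.Ioc (2/3:ℝ) 1,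
      (if x < 1/3 then A₁.indicator 1 x
        else if x ≤ 2/3 then (A₁.indicator 1 x + A₂.indicator 1 x) / 2
        else A₂.indicator 1 x) ∂volume = volume (A₂ ∩ Set.Ioc (2/3) 1) := by
    have key3 : ∀ x ∈ Set.Ioc (2/3:ℝ) 1,
        (if x < 1/3 then A₁.indicator (1 : ℝ → ℝ≥0∞) x
          else if x ≤ 2/3 then (A₁.indicator 1 x + A₂.indicator 1 x) / 2
          else A₂.indicator 1 x) = A₂.indicator 1 x := by
      intro x hx
      rw [if_neg (by linarith [hx.1] : ¬ x < 1/3), if_neg (by linarith [hx.1] : ¬ x ≤ 2/3)]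
    rw [setLIntegral_congr_fun measurableSet_Ioc key3,
      lintegral_indicator_one hA₂, Measure.restrict_apply hA₂]
  have e2 : ∫⁻ x in Set.Icc (1/3:ℝ) (2/3),
      (if x < 1/3 then A₁.indicator 1 x
        else if x ≤ 2/3 then (A₁.indicator 1 x + A₂.indicator 1 x) / 2
        else A₂.indicator 1 x) ∂volume
      = (volume (A₁ ∩ Set.Icc (1/3) (2/3)) + volume (A₂ ∩ Set.Icc (1/3) (2/3))) * 2⁻¹ := by
    have key2 : ∀ x ∈ Set.Icc (1/3:ℝ) (2/3),
        (if x < 1/3 then A₁.indicator (1 : ℝ → ℝ≥0∞) x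
          else if x ≤ 2/3 then (A₁.indicator 1 x + A₂.indicator 1 x) / 2
          else A₂.indicator 1 x) = (A₁.indicator 1 x + A₂.indicator 1 x) * 2⁻¹ := by
      intro x hx
      rw [if_neg (by linarith [hx.1] : ¬ x < 1/3), if_pos hx.2, div_eq_mul_inv]
    rw [setLIntegral_congr_fun measurableSet_Icc key2,
      lintegral_mul_const' _ _ (by simp),
      lintegral_add_left (measurable_one.indicator hA₁),
      lintegral_indicator_one hA₁, lintegral_indicator_one hA₂,
      Measure.restrict_apply hA₁, Measure.restrict_apply hA₂]
  rw [e1, e2, e3]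
  -- rewrite the intersections as preimages of pieces of B
  have i1 : A₁ ∩ Set.Ico 0 (1/3) = f₁ ⁻¹' (B ∩ Set.Ico 0 (1/2)) := by
    ext y
    simp only [hA₁def, Set.mem_inter_iff, Set.mem_preimage, Set.mem_Ico, hf₁]
    constructor
    · rintro ⟨h, h0, h1⟩; exact ⟨h, by linarith, by linarith⟩
    · rintro ⟨h, h0, h1⟩; exact ⟨h, by linarith, by linarith⟩
  have i2 : A₁ ∩ Set.Icc (1/3) (2/3) = f₁ ⁻¹' (B ∩ Set.Icc (1/2) 1) := by
    ext y
    simp only [hA₁def, Set.mem_inter_iff, Set.mem_preimage, Set.mem_Icc, hf₁]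
    constructor
    · rintro ⟨h, h0, h1⟩; exact ⟨h, by linarith, by linarith⟩
    · rintro ⟨h, h0, h1⟩; exact ⟨h, by linarith, by linarith⟩
  have i3 : A₂ ∩ Set.Icc (1/3) (2/3) = f₂ ⁻¹' (B ∩ Set.Icc 0 (1/2)) := by
    ext y
    simp only [hA₂def, Set.mem_inter_iff, Set.mem_preimage, Set.mem_Icc, hf₂]
    constructor
    · rintro ⟨h, h0, h1⟩; exact ⟨h, by linarith, by linarith⟩
    · rintro ⟨h, h0, h1⟩; exact ⟨h, by linarith, by linarith⟩
  have i4 : A₂ ∩ Set.Ioc (2/3) 1 = f₂ ⁻¹' (B ∩ Set.Ioc (1/2) 1) := by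
    ext y
    simp only [hA₂def, Set.mem_inter_iff, Set.mem_preimage, Set.mem_Ioc, hf₂]
    constructor
    · rintro ⟨h, h0, h1⟩; exact ⟨h, by linarith, by linarith⟩
    · rintro ⟨h, h0, h1⟩; exact ⟨h, by linarith, by linarith⟩
  have v1 : ∀ C : Set ℝ, volume (f₁ ⁻¹' C) = ENNReal.ofReal (2/3) * volume C := by
    intro C
    rw [hf₁, Real.volume_preimage_mul_left (by norm_num : (3/2:ℝ) ≠ 0)]
    norm_num
  have v2 : ∀ C : Set ℝ, volume (f₂ ⁻¹' C) = ENNReal.ofReal (2/3) * volume C := by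
    intro C
    have hff : f₂ = fun x : ℝ => (3/2) * x + (-(1/2)) := by
      funext y; rw [hf₂]; ring
    rw [hff, vol_aff (3/2) (-(1/2)) (by norm_num)]
    norm_num
  rw [i1, i2, i3, i4, v1, v1, v2, v2]
  -- measure bookkeeping around the point 1/2
  have hnull : volume (B ∩ {(1/2:ℝ)}) = 0 :=
    measure_mono_null Set.inter_subset_right (measure_singleton _)
  have munion : ∀ s t : Set ℝ, volume t = 0 → volume (s ∪ t) = volume s := fun s t ht =>
    le_antisymm ((measure_union_le s t).trans (by rw [ht, add_zero]))
      (measure_mono Set.subset_union_left)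
  have m1 : volume (B ∩ Set.Icc (0:ℝ) (1/2)) = volume (B ∩ Set.Ico 0 (1/2)) := by
    rw [← Set.Ico_union_right (by norm_num : (0:ℝ) ≤ 1/2), Set.inter_union_distrib_left,
      munion _ _ hnull]
  have m2 : volume (B ∩ Set.Icc (1/2:ℝ) 1) = volume (B ∩ Set.Ioc (1/2) 1) := by
    rw [← Set.Ioc_union_left (by norm_num : (1/2:ℝ) ≤ 1), Set.inter_union_distrib_left,
      munion _ _ hnull]
  have m3 : volume (B ∩ Set.Icc (0:ℝ) 1)
      = volume (B ∩ Set.Ico 0 (1/2)) + volume (B ∩ Set.Ioc (1/2) 1) := by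
    rw [← Set.Ico_union_Icc_eq_Icc (by norm_num : (0:ℝ) ≤ 1/2) (by norm_num : (1/2:ℝ) ≤ 1),
      Set.inter_union_distrib_left,
      measure_union ?_ (hB.inter measurableSet_Icc), m2]
    rw [Set.disjoint_left]
    rintro y ⟨_, _, hy⟩ ⟨_, hy', _⟩
    linarith
  rw [m1, m2, m3]
  exact arith23 _ _
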